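/- Let d ≥ 1 and 1 ≤ q ≤ d. For subsets I of {1,...,d} with |I| ≥ q, set ρ(I) = (-1)^{|I|-q} C(|I|-1, q-1). For x ∈ ℝ^d, let L_I^⊥ = {ξ ∈ ℝ^d : ξ_i = 0 for all i ∈ I}. Then the indicator function of the union ⋃_{|I|≥q} L_I^⊥ equals ∑_{|I|≥q} ρ(I) · (indicator of L_I^⊥), as functions on ℝ^d. -/

import Mathlib

open Finset

lemma auxA (r m : ℕ) (hrm : r ≤ m) :
    ∑ j ∈ Icc r m, (-1:ℤ)^(j-r) * (m.choose j) * (j.choose r) =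
      if m = r then 1 else 0 := by
  rw [← Finset.Ico_add_one_right_eq_Icc, Finset.sum_Ico_eq_sum_range]
  have key : ∀ t ∈ range (m + 1 - r), (-1:ℤ)^(r+t-r) * (m.choose (r+t)) * ((r+t).choose r)
      = (m.choose r : ℤ) * ((-1:ℤ)^t * ((m-r).choose t)) := by
    intro t ht
    rw [mem_range] at ht
    have h1 : r + t ≤ m := by omega
    have h2 : r ≤ r + t := by omega
    have h4 : m.choose (r+t) * (r+t).choose r = m.choose r * (m-r).choose t := by
      have := Nat.choose_mul (n := m) h2
      simpa [show r + t - r = t by omega] using this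
    have h5 : ((m.choose (t+r) : ℤ)) * ((t+r).choose r : ℤ)
        = (m.choose r : ℤ) * ((m-r).choose t : ℤ) := by
      rw [Nat.add_comm t r]; exact_mod_cast h4
    rw [show r + t - r = t by omega, Nat.add_comm r t]
    linear_combination (-1:ℤ)^t * h5
  rw [Finset.sum_congr rfl key, ← Finset.mul_sum]
  have hr : m + 1 - r = (m - r) + 1 := by omega
  rw [hr, Int.alternating_sum_range_choose]
  by_cases h : m = r
  · simp [h]
  · have : m - r ≠ 0 := by omega
    simp [h, this]

lemma auxB (q : ℕ) (hq : 1 ≤ q) : ∀ m, q ≤ m →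
    ∑ k ∈ Icc q m, (-1:ℤ)^(k-q) * (m.choose k) * ((k-1).choose (q-1)) = 1 := by
  intro m hm
  induction m, hm using Nat.le_induction with
  | base => simp
  | succ m hm ih =>
    have pascal : ∀ k ∈ Icc q (m+1),
        (-1:ℤ)^(k-q) * ((m+1).choose k) * ((k-1).choose (q-1))
        = (-1:ℤ)^(k-q) * (m.choose (k-1)) * ((k-1).choose (q-1))
          + (-1:ℤ)^(k-q) * (m.choose k) * ((k-1).choose (q-1)) := by
      intro k hk
      rw [mem_Icc] at hk
      have hk1 : 1 ≤ k := le_trans hq hk.1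
      have hp : (m+1).choose k = m.choose (k-1) + m.choose k := by
        conv_lhs => rw [show k = (k-1) + 1 by omega, Nat.choose_succ_succ']
        rw [show k - 1 + 1 = k by omega]
      rw [hp]
      push_cast
      ring
    rw [Finset.sum_congr rfl pascal, Finset.sum_add_distrib]
    have h2 : ∑ k ∈ Icc q (m+1), (-1:ℤ)^(k-q) * (m.choose k) * ((k-1).choose (q-1)) = 1 := by
      rw [show Icc q (m+1) = insert (m+1) (Icc q m) from
        (Finset.insert_Icc_right_eq_Icc_add_one (by omega)).symm]
      rw [Finset.sum_insert (by simp)]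
      rw [ih, Nat.choose_succ_self]
      simp
    have h1 : ∑ k ∈ Icc q (m+1), (-1:ℤ)^(k-q) * (m.choose (k-1)) * ((k-1).choose (q-1)) = 0 := by
      have := auxA (q-1) m (by omega)
      rw [if_neg (by omega)] at this
      rw [← this]
      rw [← Finset.Ico_add_one_right_eq_Icc, ← Finset.Ico_add_one_right_eq_Icc, Finset.sum_Ico_eq_sum_range,
        Finset.sum_Ico_eq_sum_range]
      rw [show m + 1 + 1 - q = m + 1 - (q-1) by omega]
      apply Finset.sum_congr rfl
      intro i _
      rw [show q + i - q = i by omega, show q + i - 1 = q - 1 + i by omega,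
        show q - 1 + i - (q - 1) = i by omega]
    rw [h1, h2]
    ring

theorem patchwork_indicator_identity (d q : ℕ) (hq : 1 ≤ q) (hd : q ≤ d)
    (ρ : Finset (Fin d) → ℤ)
    (hρ : ∀ I : Finset (Fin d), q ≤ I.card →
      ρ I = (-1 : ℤ) ^ (I.card - q) * ((I.card - 1).choose (q - 1)))
    (ξ : Fin d → ℝ) :
    Set.indicator (⋃ I ∈ {I : Finset (Fin d) | q ≤ I.card},
        {x : Fin d → ℝ | ∀ i ∈ I, x i = 0}) (fun _ => (1 : ℝ)) ξ =
      ∑ I ∈ Finset.univ.powerset.filter (fun I : Finset (Fin d) => q ≤ I.card),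
        (ρ I : ℝ) *
          Set.indicator {x : Fin d → ℝ | ∀ i ∈ I, x i = 0} (fun _ => (1 : ℝ)) ξ := by
  classical
  set Z : Finset (Fin d) := Finset.univ.filter (fun i => ξ i = 0) with hZ
  have hsub : ∀ I : Finset (Fin d), (∀ i ∈ I, ξ i = 0) ↔ I ⊆ Z := by
    intro I
    constructor
    · intro h i hi; simp [hZ, h i hi]
    · intro h i hi; have := h hi; simp [hZ] at this; exact this
  -- rewrite RHS
  have hRHS : ∑ I ∈ Finset.univ.powerset.filter (fun I : Finset (Fin d) => q ≤ I.card),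
        (ρ I : ℝ) *
          Set.indicator {x : Fin d → ℝ | ∀ i ∈ I, x i = 0} (fun _ => (1 : ℝ)) ξ
      = ((∑ I ∈ Z.powerset.filter (fun I => q ≤ I.card), ρ I : ℤ) : ℝ) := by
    have step1 : ∀ I ∈ Finset.univ.powerset.filter (fun I : Finset (Fin d) => q ≤ I.card),
        (ρ I : ℝ) * Set.indicator {x : Fin d → ℝ | ∀ i ∈ I, x i = 0} (fun _ => (1:ℝ)) ξ
        = if I ⊆ Z then (ρ I : ℝ) else 0 := by
      intro I _
      rw [Set.indicator_apply]
      simp only [Set.mem_setOf_eq]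
      by_cases h : I ⊆ Z
      · rw [if_pos ((hsub I).2 h), if_pos h, mul_one]
      · rw [if_neg (fun hh => h ((hsub I).1 hh)), if_neg h, mul_zero]
    rw [Finset.sum_congr rfl step1, ← Finset.sum_filter, Finset.filter_filter]
    rw [show Finset.univ.powerset.filter (fun I : Finset (Fin d) => q ≤ I.card ∧ I ⊆ Z)
      = Z.powerset.filter (fun I => q ≤ I.card) by
        ext I; simp [and_comm]]
    push_cast
    rfl
  rw [hRHS]
  -- evaluate the integer sum
  have hsum : ∑ I ∈ Z.powerset.filter (fun I => q ≤ I.card), ρ I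
      = ∑ k ∈ Icc q Z.card, (-1:ℤ)^(k-q) * (Z.card.choose k) * ((k-1).choose (q-1)) := by
    rw [Finset.sum_filter, Finset.sum_powerset]
    have step : ∀ j ∈ range (Z.card + 1),
        ∑ t ∈ Finset.powersetCard j Z, (if q ≤ t.card then ρ t else 0)
        = if q ≤ j then (Z.card.choose j : ℤ) * ((-1:ℤ)^(j-q) * ((j-1).choose (q-1))) else 0 := by
      intro j _
      by_cases hqj : q ≤ j
      · rw [if_pos hqj]
        rw [Finset.sum_congr rfl (fun t ht => ?_), Finset.sum_const,
          Finset.card_powersetCard, nsmul_eq_mul]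
        have htj : t.card = j := (Finset.mem_powersetCard.1 ht).2
        rw [if_pos (htj ▸ hqj), hρ t (htj ▸ hqj), htj]
      · rw [if_neg hqj]
        apply Finset.sum_eq_zero
        intro t ht
        have htj : t.card = j := (Finset.mem_powersetCard.1 ht).2
        rw [if_neg (htj ▸ hqj)]
    rw [Finset.sum_congr rfl step, ← Finset.sum_filter]
    rw [show (range (Z.card + 1)).filter (fun j => q ≤ j) = Icc q Z.card by
      ext j; simp [Nat.lt_succ_iff]; omega]
    apply Finset.sum_congr rfl
    intro k _
    ring
  rw [hsum]
  by_cases hm : q ≤ Z.card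
  · rw [auxB q hq Z.card hm]
    rw [Set.indicator_apply, if_pos]
    · norm_num
    · refine Set.mem_iUnion₂.2 ⟨Z, hm, ?_⟩
      intro i hi
      exact (hsub Z).2 (le_refl _) i hi
  · rw [show Icc q Z.card = ∅ by rw [Finset.Icc_eq_empty]; omega]
    rw [Set.indicator_apply, if_neg]
    · simp
    · intro h
      obtain ⟨I, hIq, hIx⟩ := Set.mem_iUnion₂.1 h
      have : I ⊆ Z := (hsub I).1 hIx
      have := Finset.card_le_card this
      simp only [Set.mem_setOf_eq] at hIq
      omega
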